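/- If g : ℝ^m → ℝ is strongly convex with modulus c > 0, then the gradient of its Legendre–Fenchel conjugate g* is Lipschitz with constant 1/c: ‖∇g*(s₁) − ∇g*(s₂)‖ ≤ (1/c)‖s₁ − s₂‖ for all s₁, s₂ where g* is differentiable. -/

import Mathlib

open scoped RealInnerProductSpace
open Set Filter Topology

variable {E : Type*} [NormedAddCommGroup E] [InnerProductSpace ℝ E] [CompleteSpace E]

theorem dirDeriv {f : E → ℝ} {G x : E} (h : HasGradientAt f G x) (v : E) :
    Tendsto (fun t : ℝ => (f (x + t • v) - f x) / t) (𝓝[>] (0:ℝ)) (𝓝 ⟪G, v⟫) := by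
  have hcurve : HasDerivAt (fun t : ℝ => x + t • v) v 0 := by
    simpa using ((hasDerivAt_id (0:ℝ)).smul_const v).const_add x
  have hfd : HasFDerivAt f ((InnerProductSpace.toDual ℝ E) G) x :=
    hasGradientAt_iff_hasFDerivAt.mp h
  have hfd' : HasFDerivAt f ((InnerProductSpace.toDual ℝ E) G) ((fun t : ℝ => x + t • v) 0) := by
    simpa using hfd
  have hd : HasDerivAt (fun t : ℝ => f (x + t • v)) ⟪G, v⟫ 0 := by
    have := hfd'.comp_hasDerivAt 0 hcurve
    simp [Function.comp, InnerProductSpace.toDual_apply_apply] at this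
    exact this
  have hslope := hasDerivAt_iff_tendsto_slope.mp hd
  have hmono : 𝓝[>] (0:ℝ) ≤ 𝓝[{(0:ℝ)}ᶜ] 0 :=
    nhdsWithin_mono 0 (fun t ht => ne_of_gt ht)
  refine (hslope.mono_left hmono).congr' ?_
  filter_upwards with t
  simp [slope_def_field, div_eq_inv_mul]

theorem grad_le_of_convex {f : E → ℝ} (hf : ConvexOn ℝ Set.univ f)
    {G x : E} (h : HasGradientAt f G x) (y : E) :
    ⟪G, y - x⟫ ≤ f y - f x := by
  refine le_of_tendsto (dirDeriv h (y - x)) ?_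
  filter_upwards [Ioc_mem_nhdsGT_of_mem (Set.left_mem_Ico.mpr one_pos)] with t ht
  have hx : x + t • (y - x) = (1 - t) • x + t • y := by module
  have hc := hf.2 (Set.mem_univ x) (Set.mem_univ y)
    (by linarith [ht.2] : (0:ℝ) ≤ 1 - t) ht.1.le (by ring)
  rw [div_le_iff₀ ht.1, hx]
  simp only [smul_eq_mul] at hc
  linarith

theorem grad_ge_of_smooth {f : E → ℝ} {K : ℝ} (hK : 0 ≤ K)
    (hf : ConvexOn ℝ Set.univ (fun t => K / 2 * ‖t‖ ^ 2 - f t))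
    {G x : E} (h : HasGradientAt f G x) (y : E) :
    f y - f x - K / 2 * ‖y - x‖ ^ 2 ≤ ⟪G, y - x⟫ := by
  refine ge_of_tendsto (dirDeriv h (y - x)) ?_
  filter_upwards [Ioc_mem_nhdsGT_of_mem (Set.left_mem_Ico.mpr one_pos)] with t ht
  have hx : x + t • (y - x) = (1 - t) • x + t • y := by module
  have hc := hf.2 (Set.mem_univ x) (Set.mem_univ y)
    (by linarith [ht.2] : (0:ℝ) ≤ 1 - t) ht.1.le (by ring)
  simp only [smul_eq_mul] at hc
  rw [le_div_iff₀ ht.1, ← hx] at *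
  -- norm expansions
  have e1 : ‖x + t • (y - x)‖ ^ 2
      = ‖x‖ ^ 2 + 2 * t * ⟪x, y - x⟫ + t ^ 2 * ‖y - x‖ ^ 2 := by
    rw [← real_inner_self_eq_norm_sq, ← real_inner_self_eq_norm_sq,
      ← real_inner_self_eq_norm_sq]
    simp only [inner_add_left, inner_add_right, real_inner_smul_left, real_inner_smul_right,
      real_inner_comm x (y - x)]
    ring
  have e2 : ‖y‖ ^ 2 = ‖x‖ ^ 2 + 2 * ⟪x, y - x⟫ + ‖y - x‖ ^ 2 := by
    rw [← real_inner_self_eq_norm_sq, ← real_inner_self_eq_norm_sq,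
      ← real_inner_self_eq_norm_sq]
    simp only [inner_sub_left, inner_sub_right, real_inner_comm x y]
    ring
  rw [e1, e2] at hc
  nlinarith [mul_nonneg (mul_nonneg hK (sq_nonneg t)) (sq_nonneg ‖y - x‖)]

/-- The gradient of the Legendre–Fenchel conjugate of a strongly convex function
with modulus `c > 0` is Lipschitz with constant `1/c`. -/
theorem stmt4 {m : ℕ} (c : ℝ) (hc : 0 < c)
    (g gstar : EuclideanSpace ℝ (Fin m) → ℝ)
    (hstrong : ∀ x₁ x₂ : EuclideanSpace ℝ (Fin m), ∀ a ∈ Set.Icc (0:ℝ) 1,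
      g (a • x₁ + (1 - a) • x₂)
        ≤ a * g x₁ + (1 - a) * g x₂ - c / 2 * a * (1 - a) * ‖x₁ - x₂‖ ^ 2)
    (hgstar : ∀ s, IsLUB {y : ℝ | ∃ x, y = ⟪s, x⟫ - g x} (gstar s))
    (s₁ s₂ G₁ G₂ : EuclideanSpace ℝ (Fin m))
    (h1 : HasGradientAt gstar G₁ s₁) (h2 : HasGradientAt gstar G₂ s₂) :
    ‖G₁ - G₂‖ ≤ (1 / c) * ‖s₁ - s₂‖ := by
  -- upper bound from LUB
  have hub : ∀ s x : EuclideanSpace ℝ (Fin m), ⟪s, x⟫ - g x ≤ gstar s := fun s x => (hgstar s).1 ⟨x, rfl⟩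
  -- gstar is convex
  have hconv : ConvexOn ℝ Set.univ gstar := by
    refine ⟨convex_univ, fun t₁ _ t₂ _ a b ha hb hab => ?_⟩
    have hb' : b = 1 - a := by linarith
    subst hb'
    simp only [smul_eq_mul]
    refine (hgstar _).2 ?_
    rintro y ⟨x, rfl⟩
    have e : ⟪a • t₁ + (1 - a) • t₂, x⟫ = a * ⟪t₁, x⟫ + (1 - a) * ⟪t₂, x⟫ := by
      simp only [inner_add_left, real_inner_smul_left]
    have u1 := mul_le_mul_of_nonneg_left (hub t₁ x) ha
    have u2 := mul_le_mul_of_nonneg_left (hub t₂ x) hb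
    rw [e]; linarith
  -- the dual "smoothness" : 1/c/2 * ‖·‖² - gstar is convex
  have hψ : ConvexOn ℝ Set.univ (fun t : EuclideanSpace ℝ (Fin m) => 1 / c / 2 * ‖t‖ ^ 2 - gstar t) := by
    refine ⟨convex_univ, fun t₁ _ t₂ _ a b ha hb hab => ?_⟩
    have hb' : b = 1 - a := by linarith
    subst hb'
    have ha1 : a ≤ 1 := by linarith
    simp only [smul_eq_mul]
    have hnorm : ‖a • t₁ + (1 - a) • t₂‖ ^ 2
        = a * ‖t₁‖ ^ 2 + (1 - a) * ‖t₂‖ ^ 2 - a * (1 - a) * ‖t₁ - t₂‖ ^ 2 := by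
      rw [← real_inner_self_eq_norm_sq, ← real_inner_self_eq_norm_sq,
        ← real_inner_self_eq_norm_sq, ← real_inner_self_eq_norm_sq]
      simp only [inner_add_left, inner_add_right, inner_sub_left, inner_sub_right,
        real_inner_smul_left, real_inner_smul_right]
      ring
    have key : a * gstar t₁ + (1 - a) * gstar t₂
        ≤ gstar (a • t₁ + (1 - a) • t₂) + a * (1 - a) * (1 / c / 2 * ‖t₁ - t₂‖ ^ 2) := by
      refine le_of_forall_pos_le_add fun ε hε => ?_
      obtain ⟨y₁, ⟨x₁, rfl⟩, hy₁, -⟩ :=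
        (hgstar t₁).exists_between (by linarith : gstar t₁ - ε / 2 < gstar t₁)
      obtain ⟨y₂, ⟨x₂, rfl⟩, hy₂, -⟩ :=
        (hgstar t₂).exists_between (by linarith : gstar t₂ - ε / 2 < gstar t₂)
      have hstr := hstrong x₁ x₂ a ⟨ha, ha1⟩
      have hU := hub (a • t₁ + (1 - a) • t₂) (a • x₁ + (1 - a) • x₂)
      have hid : ⟪a • t₁ + (1 - a) • t₂, a • x₁ + (1 - a) • x₂⟫
          = a * ⟪t₁, x₁⟫ + (1 - a) * ⟪t₂, x₂⟫ - a * (1 - a) * ⟪t₁ - t₂, x₁ - x₂⟫ := by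
        simp only [inner_add_left, inner_add_right, inner_sub_left, inner_sub_right,
          real_inner_smul_left, real_inner_smul_right]
        ring
      have h2c : (0 : ℝ) < 2 * c := by linarith
      have hq0 : ⟪t₁ - t₂, x₁ - x₂⟫ - c / 2 * ‖x₁ - x₂‖ ^ 2 ≤ 1 / c / 2 * ‖t₁ - t₂‖ ^ 2 := by
        rw [show (1 : ℝ) / c / 2 * ‖t₁ - t₂‖ ^ 2 = ‖t₁ - t₂‖ ^ 2 / (2 * c) by ring,
          le_div_iff₀ h2c]
        nlinarith [mul_le_mul_of_nonneg_left (real_inner_le_norm (t₁ - t₂) (x₁ - x₂)) h2c.le,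
          sq_nonneg (‖t₁ - t₂‖ - c * ‖x₁ - x₂‖)]
      have hq := mul_le_mul_of_nonneg_left hq0 (mul_nonneg ha (by linarith : (0:ℝ) ≤ 1 - a))
      have u1 := mul_le_mul_of_nonneg_left (le_of_lt hy₁) ha
      have u2 := mul_le_mul_of_nonneg_left (le_of_lt hy₂) (by linarith : (0:ℝ) ≤ 1 - a)
      linarith [hε]
    rw [hnorm]
    linarith [key]
  have hK : (0:ℝ) ≤ 1 / c := by positivity
  -- subgradient and smoothness inequalities at s₁ and s₂
  have sub1 := grad_le_of_convex hconv h1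
  have sub2 := grad_le_of_convex hconv h2
  have sm1 := grad_ge_of_smooth hK hψ h1
  have sm2 := grad_ge_of_smooth hK hψ h2
  set d : EuclideanSpace ℝ (Fin m) := G₁ - G₂ with hd
  have id4 : ⟪G₁, d⟫ - ⟪G₂, d⟫ = ‖d‖ ^ 2 := by
    rw [← inner_sub_left, ← hd, real_inner_self_eq_norm_sq]
  -- inequality (I): evaluate at y = s₁ - c • d
  have yIa : (s₁ - c • d) - s₁ = -(c • d) := by abel
  have yIb : (s₁ - c • d) - s₂ = (s₁ - s₂) - c • d := by abel
  have nI : ‖(s₁ - c • d) - s₁‖ ^ 2 = c ^ 2 * ‖d‖ ^ 2 := by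
    rw [yIa, norm_neg, norm_smul, Real.norm_eq_abs, abs_of_pos hc]; ring
  have I1 := sub2 (s₁ - c • d)
  have I2 := sm1 (s₁ - c • d)
  rw [yIb, inner_sub_right, real_inner_smul_right] at I1
  rw [nI, yIa, inner_neg_right, real_inner_smul_right] at I2
  -- inequality (II): evaluate at y = s₂ + c • d
  have yIIa : (s₂ + c • d) - s₂ = c • d := by abel
  have yIIb : (s₂ + c • d) - s₁ = (s₂ - s₁) + c • d := by abel
  have nII : ‖(s₂ + c • d) - s₂‖ ^ 2 = c ^ 2 * ‖d‖ ^ 2 := by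
    rw [yIIa, norm_smul, Real.norm_eq_abs, abs_of_pos hc]; ring
  have II1 := sub1 (s₂ + c • d)
  have II2 := sm2 (s₂ + c • d)
  rw [yIIb, inner_add_right, real_inner_smul_right] at II1
  rw [nII, yIIa, real_inner_smul_right] at II2
  have i5 : ⟪G₁, s₂ - s₁⟫ + ⟪G₂, s₁ - s₂⟫ = -⟪d, s₁ - s₂⟫ := by
    rw [hd]
    simp only [inner_sub_left, inner_sub_right]
    ring
  have hcs : ⟪d, s₁ - s₂⟫ ≤ ‖d‖ * ‖s₁ - s₂‖ := real_inner_le_norm d (s₁ - s₂)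
  have hcoer : c * ‖d‖ ^ 2 ≤ ‖d‖ * ‖s₁ - s₂‖ := by
    have hcc : 1 / c / 2 * (c ^ 2 * ‖d‖ ^ 2) = c / 2 * ‖d‖ ^ 2 := by
      field_simp
    rw [hcc] at I2 II2
    have id4c : c * (⟪G₁, d⟫ - ⟪G₂, d⟫) = c * ‖d‖ ^ 2 := by rw [id4]
    linarith [I1, I2, II1, II2, i5, hcs, id4c]
  rcases eq_or_lt_of_le (norm_nonneg d) with hz | hz
  · rw [← hz]; positivity
  · rw [show (1:ℝ) / c * ‖s₁ - s₂‖ = ‖s₁ - s₂‖ / c by ring, le_div_iff₀ hc]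
    nlinarith [hcoer, hz]
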